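/- Let P be a partially ordered set. The tangent bundle of P coincides with the homotopy colimit of the Gauss functor: the map φ : Hocolim G → E P defined by φ(x, y) = (x, y) for y ∈ Star x and φ(x, ∞_{G_x}) = (x, ∞) is a bijective order isomorphism of posets satisfying T P ∘ φ = Π; moreover φ carries the section x ↦ (x, ∞_{G_x}) of Π to the section s∞ of T P, and carries the map x ↦ (x, 0-element of G_x) to the diagonal section s0 of T P. -/

import Mathlib

/-- `starP p = {x ∈ P | ∃ y, p ≤ y ∧ x ≤ y}`. -/
def starP {P : Type*} [PartialOrder P] (p : P) : Set P := {x | ∃ y, p ≤ y ∧ x ≤ y}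

/-- `linkP p = {x ∈ starP p | ¬ p ≤ x}`. -/
def linkP {P : Type*} [PartialOrder P] (p : P) : Set P := {x | x ∈ starP p ∧ ¬ p ≤ x}

/-- The tangent fiber `G_x`: the set `Star x` together with an extra element `∞`
(modelled as `none`); the 0-element is `some ⟨x, _⟩`. -/
def GFiber {P : Type*} [PartialOrder P] (x : P) : Type _ := Option {y : P // y ∈ starP x}

/-- The order relation on the tangent fiber `G_x`. -/
def GRel {P : Type*} [PartialOrder P] (x : P) : GFiber x → GFiber x → Prop
  | some y1, some y2 => (y1 : P) ≤ (y2 : P)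
  | some y1, none => (y1 : P) ∈ linkP x
  | none, some _ => False
  | none, none => True

open Classical in
/-- The transition map `G_{x1 ≤ x2} : G_{x1} → G_{x2}` of the Gauss functor. -/
noncomputable def GMap {P : Type*} [PartialOrder P] {x1 x2 : P} (_ : x1 ≤ x2) :
    GFiber x1 → GFiber x2
  | some y => if h' : (y : P) ∈ starP x2 then some ⟨(y : P), h'⟩ else none
  | none => none

/-- The relation of `Hocolim G` on `Σ x, G_x`:
`(x0,w0) ≤ (x1,w1)` iff `x0 ≤ x1` and `G_{x0≤x1}(w0) ≤ w1` in `G_{x1}`. -/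
def HocolimGRel {P : Type*} [PartialOrder P] (a b : Σ x : P, GFiber x) : Prop :=
  ∃ h : a.1 ≤ b.1, GRel b.1 (GMap h a.2) b.2

/-- `DP P = {(x,y) | ∃ z, x ≤ z ∧ y ≤ z}`. -/
def DP (P : Type*) [PartialOrder P] : Set (P × P) := {q | ∃ z, q.1 ≤ z ∧ q.2 ≤ z}

/-- `E P = D P ∪ (P × {∞})`, modelled inside `P × Option P` with `∞ = none`. -/
def EP (P : Type*) [PartialOrder P] : Set (P × Option P) :=
  {a | (∃ y : P, a.2 = some y ∧ (a.1, y) ∈ DP P) ∨ a.2 = none}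

/-- The order relation on `E P`:  `(x1,y1) ≤ (x2,y2)` iff `x1 ≤ x2` and:
`y1 ≤ y2` if `y1, y2 ∈ P`; `¬ x2 ≤ y1` if `y1 ∈ P`, `y2 = ∞`; `y2 = ∞` if `y1 = ∞`. -/
def ERel {P : Type*} [PartialOrder P] (a b : P × Option P) : Prop :=
  a.1 ≤ b.1 ∧
    match a.2, b.2 with
    | some y1, some y2 => y1 ≤ y2
    | some y1, none => ¬ b.1 ≤ y1
    | none, some _ => False
    | none, none => True

/-- The comparison map `φ : Hocolim G → E P`, `(x, y) ↦ (x, y)' for `y ∈ Star x`,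
`(x, ∞_{G_x}) ↦ (x, ∞)`. -/
def phi {P : Type*} [PartialOrder P] (a : Σ x : P, GFiber x) : P × Option P :=
  (a.1, Option.map Subtype.val a.2)

theorem stmt12 {P : Type*} [PartialOrder P] :
    -- `φ` is a bijection from `Hocolim G` onto `E P` ...
    Function.Injective (phi (P := P)) ∧
    Set.range (phi (P := P)) = EP P ∧
    -- ... which is an order isomorphism
    (∀ a b : Σ x : P, GFiber x, HocolimGRel a b ↔ ERel (phi a) (phi b)) ∧
    -- `T P ∘ φ = Π`
    (∀ a : Σ x : P, GFiber x, (phi a).1 = a.1) ∧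
    -- `φ` carries the section `x ↦ (x, ∞_{G_x})` of `Π` to the section `s∞` of `T P`
    (∀ x : P, phi ⟨x, (none : GFiber x)⟩ = (x, (none : Option P))) ∧
    -- `φ` carries `x ↦ (x, 0-element of G_x)` to the diagonal section `s0` of `T P`
    (∀ (x : P) (hx : x ∈ starP x), phi ⟨x, (some ⟨x, hx⟩ : GFiber x)⟩ = (x, some x)) := by

  refine ⟨?_, ?_, ?_, fun a => rfl, fun x => rfl, fun x hx => rfl⟩
  · rintro ⟨x1, w1⟩ ⟨x2, w2⟩ h
    simp only [phi, Prod.mk.injEq] at h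
    obtain ⟨rfl, h2⟩ := h
    congr 1
    cases w1 <;> cases w2 <;> simp_all [Option.map]
    · rfl
    exact congrArg some (Subtype.ext h2)
  · ext ⟨x, oy⟩
    constructor
    · rintro ⟨⟨x', w⟩, heq⟩
      rw [← heq]
      cases w with
      | none => exact Or.inr rfl
      | some y => exact Or.inl ⟨y.1, rfl, y.2⟩
    · rintro (⟨y, hy, z, hz1, hz2⟩ | h)
      · have : oy = some y := hy
        subst this
        exact ⟨⟨x, some ⟨y, z, hz1, hz2⟩⟩, rfl⟩
      · have : oy = none := h
        subst this
        exact ⟨⟨x, none⟩, rfl⟩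
  · rintro ⟨x1, w1⟩ ⟨x2, w2⟩
    cases w1 with
    | none =>
      cases w2 with
      | none => exact ⟨fun ⟨h, _⟩ => ⟨h, trivial⟩, fun ⟨h, _⟩ => ⟨h, trivial⟩⟩
      | some y2 =>
        exact ⟨fun ⟨h, h2⟩ => absurd h2 (by simp [GMap, GRel]),
          fun ⟨h, h2⟩ => absurd h2 (by simp [phi])⟩
    | some y1 =>
      cases w2 with
      | some y2 =>
        constructor
        · rintro ⟨h, h2⟩
          refine ⟨h, ?_⟩
          simp only [GMap] at h2
          split_ifs at h2 <;> simp only [*, ↓reduceDIte] at h2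
          · exact h2
          · exact h2.elim
        · rintro ⟨h, h2⟩
          simp only [phi] at h2
          refine ⟨h, ?_⟩
          have hst : (y1 : P) ∈ starP x2 := by
            obtain ⟨z, hz1, hz2⟩ := y2.2
            exact ⟨z, hz1, le_trans h2 hz2⟩
          simp only [GMap, hst, ↓reduceDIte]
          exact h2
      | none =>
        constructor
        · rintro ⟨h, h2⟩
          refine ⟨h, ?_⟩
          simp only [GMap] at h2
          split_ifs at h2 <;> simp only [*, ↓reduceDIte] at h2
          · exact h2.2
          · next hns =>
            intro hle
            exact hns ⟨y1, hle, le_refl _⟩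
        · rintro ⟨h, h2⟩
          simp only [phi] at h2
          refine ⟨h, ?_⟩
          simp only [GMap]
          split_ifs <;> simp only [*, ↓reduceDIte]
          · next hst => exact ⟨hst, h2⟩
          · trivial
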